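/- For every real λ with 0 < λ < 1, the quasi-period integral of the Legendre elliptic curve satisfies ∫_0^λ x·dx/√(x(1−x)(λ−x)) = 2·(K(√λ) − E(√λ)). -/

import Mathlib

open MeasureTheory Set

/-- The complete elliptic integral of the first kind. -/
noncomputable def Kint (x : ℝ) : ℝ :=
  ∫ t in (0:ℝ)..1, 1 / Real.sqrt ((1 - t ^ 2) * (1 - x ^ 2 * t ^ 2))

/-- The complete elliptic integral of the second kind. -/
noncomputable def Eint (x : ℝ) : ℝ :=
  ∫ t in (0:ℝ)..1, Real.sqrt (1 - x ^ 2 * t ^ 2) / Real.sqrt (1 - t ^ 2)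


-- integrability of (1-t)^(-1/2) on (0,1)
lemma base_int : IntegrableOn (fun t : ℝ => (1 - t) ^ (-(1/2) : ℝ)) (Ioo (0:ℝ) 1) := by
  have h : IntervalIntegrable (fun x : ℝ => x ^ (-(1/2) : ℝ)) volume 0 1 :=
    intervalIntegral.intervalIntegrable_rpow' (by norm_num)
  have h2 := h.comp_sub_left 1
  simp only [sub_zero, sub_self] at h2
  exact (intervalIntegrable_iff_integrableOn_Ioo_of_le (by norm_num)).1 h2.symm

lemma sqrt_bound {l t : ℝ} (h0 : 0 < l) (h1 : l < 1) (ht : t ∈ Ioo (0:ℝ) 1) :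
    Real.sqrt ((1 - t) * (1 - l)) ≤ Real.sqrt ((1 - t ^ 2) * (1 - l * t ^ 2)) := by
  obtain ⟨ht0, ht1⟩ := ht
  apply Real.sqrt_le_sqrt
  have h1t : 0 < 1 - t := by linarith
  have e1 : 1 - t ≤ 1 - t ^ 2 := by nlinarith
  have e2 : 1 - l ≤ 1 - l * t ^ 2 := by nlinarith
  exact mul_le_mul e1 e2 (by linarith) (by nlinarith)

lemma K_integrable {l : ℝ} (h0 : 0 < l) (h1 : l < 1) :
    IntervalIntegrable (fun t : ℝ => 1 / Real.sqrt ((1 - t ^ 2) * (1 - l * t ^ 2)))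
      volume 0 1 := by
  rw [intervalIntegrable_iff_integrableOn_Ioo_of_le (by norm_num)]
  apply Integrable.mono' (g := fun t => (1-l) ^ (-(1/2):ℝ) * (1 - t) ^ (-(1/2) : ℝ))
      (base_int.const_mul _)
  · exact ((Measurable.aestronglyMeasurable (by fun_prop))).restrict
  · filter_upwards [ae_restrict_mem measurableSet_Ioo] with t ht
    obtain ⟨ht0, ht1⟩ := ht
    have h1t : 0 < 1 - t := by linarith
    have hsp : 0 < Real.sqrt ((1 - t) * (1 - l)) :=
      Real.sqrt_pos.2 (by nlinarith)
    have hb := sqrt_bound h0 h1 ⟨ht0, ht1⟩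
    rw [Real.norm_eq_abs, abs_of_nonneg (by positivity)]
    calc 1 / Real.sqrt ((1 - t ^ 2) * (1 - l * t ^ 2))
        ≤ 1 / Real.sqrt ((1 - t) * (1 - l)) := by
          apply one_div_le_one_div_of_le hsp hb
      _ = (1-l) ^ (-(1/2):ℝ) * (1 - t) ^ (-(1/2) : ℝ) := by
          rw [Real.sqrt_mul h1t.le, Real.sqrt_eq_rpow, Real.sqrt_eq_rpow,
            Real.rpow_neg h1t.le, Real.rpow_neg (by linarith : (0:ℝ) ≤ 1 - l),
            one_div, mul_inv, mul_comm]

lemma E_integrable {l : ℝ} (h0 : 0 < l) (h1 : l < 1) :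
    IntervalIntegrable (fun t : ℝ => Real.sqrt (1 - l * t ^ 2) / Real.sqrt (1 - t ^ 2))
      volume 0 1 := by
  rw [intervalIntegrable_iff_integrableOn_Ioo_of_le (by norm_num)]
  apply Integrable.mono' (g := fun t => (1 - t) ^ (-(1/2) : ℝ)) base_int
  · exact ((Measurable.aestronglyMeasurable (by fun_prop))).restrict
  · filter_upwards [ae_restrict_mem measurableSet_Ioo] with t ht
    obtain ⟨ht0, ht1⟩ := ht
    have h1t : 0 < 1 - t := by linarith
    have hA : (0:ℝ) < 1 - t ^ 2 := by nlinarith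
    have hsA : 0 < Real.sqrt (1 - t ^ 2) := Real.sqrt_pos.2 hA
    rw [Real.norm_eq_abs, abs_of_nonneg (by positivity)]
    have h1 : Real.sqrt (1 - l * t ^ 2) ≤ 1 :=
      le_trans (Real.sqrt_le_sqrt (by nlinarith)) (le_of_eq Real.sqrt_one)
    calc Real.sqrt (1 - l * t ^ 2) / Real.sqrt (1 - t ^ 2)
        ≤ 1 / Real.sqrt (1 - t ^ 2) := by
          gcongr
      _ ≤ 1 / Real.sqrt (1 - t) := by
          apply one_div_le_one_div_of_le (Real.sqrt_pos.2 h1t)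
          exact Real.sqrt_le_sqrt (by nlinarith)
      _ = (1 - t) ^ (-(1/2) : ℝ) := by
          rw [Real.sqrt_eq_rpow, one_div, ← Real.rpow_neg h1t.le]

theorem legendre_quasi_period (l : ℝ) (h0 : 0 < l) (h1 : l < 1) :
    (∫ x in (0:ℝ)..l, x / Real.sqrt (x * (1 - x) * (l - x))) =
      2 * (Kint (Real.sqrt l) - Eint (Real.sqrt l)) := by
  have hs2 : Real.sqrt l ^ 2 = l := Real.sq_sqrt h0.le
  have hK := K_integrable h0 h1
  have hE := E_integrable h0 h1
  -- change of variables x = l t^2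
  have himg : (fun t : ℝ => l * t ^ 2) '' Ioo 0 1 = Ioo 0 l := by
    ext y
    constructor
    · rintro ⟨t, ⟨ht0, ht1⟩, rfl⟩
      have hlt : t ^ 2 < 1 := by nlinarith
      constructor
      · positivity
      · simp only
        nlinarith [mul_lt_mul_of_pos_left hlt h0]
    · rintro ⟨hy0, hyl⟩
      refine ⟨Real.sqrt (y / l), ⟨Real.sqrt_pos.2 (by positivity), ?_⟩, ?_⟩
      · rw [show (1:ℝ) = Real.sqrt 1 by simp]
        apply Real.sqrt_lt_sqrt (by positivity)
        rw [div_lt_one h0]; exact hyl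
      · simp only
        rw [Real.sq_sqrt (by positivity)]
        field_simp
  have hderiv : ∀ t ∈ Ioo (0:ℝ) 1,
      HasDerivWithinAt (fun t : ℝ => l * t ^ 2) (2 * l * t) (Ioo 0 1) t := by
    intro t _
    have : HasDerivAt (fun t : ℝ => l * t ^ 2) (l * (2 * t)) t := by
      simpa using (hasDerivAt_pow 2 t).const_mul l
    exact (this.congr_deriv (by ring)).hasDerivWithinAt
  have hinj : InjOn (fun t : ℝ => l * t ^ 2) (Ioo 0 1) := by
    rintro a ⟨ha0, _⟩ b ⟨hb0, _⟩ hab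
    simp only at hab
    have h2 : a ^ 2 = b ^ 2 := mul_left_cancel₀ h0.ne' hab
    nlinarith
  have key := integral_image_eq_integral_abs_deriv_smul measurableSet_Ioo hderiv hinj
    (fun x => x / Real.sqrt (x * (1 - x) * (l - x)))
  rw [himg] at key
  -- simplify the RHS of key pointwise
  have hpt : ∀ t ∈ Ioo (0:ℝ) 1,
      |2 * l * t| • ((l * t ^ 2) / Real.sqrt ((l * t ^ 2) * (1 - l * t ^ 2) * (l - l * t ^ 2)))
        = 2 * (l * t ^ 2 / Real.sqrt ((1 - t ^ 2) * (1 - l * t ^ 2))) := by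
    intro t ⟨ht0, ht1⟩
    have hA : (0:ℝ) < 1 - t ^ 2 := by nlinarith
    have hB : (0:ℝ) < 1 - l * t ^ 2 := by nlinarith
    have hrw : (l * t ^ 2) * (1 - l * t ^ 2) * (l - l * t ^ 2)
        = (l * t) ^ 2 * ((1 - t ^ 2) * (1 - l * t ^ 2)) := by ring
    rw [hrw, Real.sqrt_mul (sq_nonneg _), Real.sqrt_sq (by positivity)]
    have hsAB : 0 < Real.sqrt ((1 - t ^ 2) * (1 - l * t ^ 2)) :=
      Real.sqrt_pos.2 (by positivity)
    rw [abs_of_pos (by positivity), smul_eq_mul]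
    field_simp
  rw [setIntegral_congr_fun measurableSet_Ioo hpt] at key
  -- now RHS
  rw [intervalIntegral.integral_of_le h0.le, integral_Ioc_eq_integral_Ioo, key]
  rw [Kint, Eint]
  simp only [hs2]
  rw [← intervalIntegral.integral_sub hK hE, ← intervalIntegral.integral_const_mul,
    intervalIntegral.integral_of_le (by norm_num : (0:ℝ) ≤ 1), integral_Ioc_eq_integral_Ioo]
  apply setIntegral_congr_fun measurableSet_Ioo
  intro t ⟨ht0, ht1⟩
  have hA : (0:ℝ) < 1 - t ^ 2 := by nlinarith
  have hB : (0:ℝ) < 1 - l * t ^ 2 := by nlinarith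
  have hsA : 0 < Real.sqrt (1 - t ^ 2) := Real.sqrt_pos.2 hA
  have hsB : 0 < Real.sqrt (1 - l * t ^ 2) := Real.sqrt_pos.2 hB
  simp only
  rw [Real.sqrt_mul hA.le]
  have hBB : Real.sqrt (1 - l * t ^ 2) * Real.sqrt (1 - l * t ^ 2) = 1 - l * t ^ 2 :=
    Real.mul_self_sqrt hB.le
  field_simp
  linear_combination hBB
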